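/- Let U ⊆ ℝⁿ be a linear subspace with orthogonal projection Π, let g ∈ ℝⁿ with Πg ≠ 0, let r > 0, and let v ∈ ℝⁿ with ‖v‖ ≤ 1. Then the minimum of y ↦ ⟨g, y⟩ over the section {y ∈ U : ‖y − rv‖ ≤ r} is attained at y* = rΠv − r·√(1 − ‖v‖² + ‖Πv‖²)·Πg/‖Πg‖, and the improvement satisfies 0 − min{⟨g,y⟩ : y ∈ U, ‖y − rv‖ ≤ r} = r·(‖Πg‖·√(1 − ‖v‖² + ‖Πv‖²) − ⟨Πg, Πv⟩). -/

import Mathlib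

/-- The orthogonal projection onto a subspace of Euclidean space, viewed as a map
into the ambient space. -/
noncomputable def proj {n : ℕ} (U : Submodule ℝ (EuclideanSpace ℝ (Fin n)))
    (g : EuclideanSpace ℝ (Fin n)) : EuclideanSpace ℝ (Fin n) :=
  (U.orthogonalProjection g : EuclideanSpace ℝ (Fin n))

set_option maxHeartbeats 1000000 in
/-- Exact ball-section improvement (interior base point).  With `Π` the orthogonal
projection onto the subspace `U`, `Πg ≠ 0`, `r > 0`, and `‖v‖ ≤ 1`, the linear
functional `y ↦ ⟨g,y⟩` over the section `{y ∈ U : ‖y − rv‖ ≤ r}` is minimized at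
`y* = rΠv − r√(1 − ‖v‖² + ‖Πv‖²) Πg/‖Πg‖`, and
`0 − min = r (‖Πg‖ √(1 − ‖v‖² + ‖Πv‖²) − ⟨Πg,Πv⟩)`. -/
theorem ball_section_interior {n : ℕ} (U : Submodule ℝ (EuclideanSpace ℝ (Fin n)))
    (g v : EuclideanSpace ℝ (Fin n)) (hv : ‖v‖ ≤ 1) (r : ℝ) (hr : 0 < r)
    (hg : proj U g ≠ 0) :
    (r • proj U v - (r * Real.sqrt (1 - ‖v‖ ^ 2 + ‖proj U v‖ ^ 2) / ‖proj U g‖) • proj U g ∈ U ∧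
      ‖(r • proj U v - (r * Real.sqrt (1 - ‖v‖ ^ 2 + ‖proj U v‖ ^ 2) / ‖proj U g‖) • proj U g) -
          r • v‖ ≤ r) ∧
    (∀ y ∈ U, ‖y - r • v‖ ≤ r →
      (inner ℝ g (r • proj U v -
          (r * Real.sqrt (1 - ‖v‖ ^ 2 + ‖proj U v‖ ^ 2) / ‖proj U g‖) • proj U g) : ℝ) ≤
        inner ℝ g y) ∧
    0 - (inner ℝ g (r • proj U v -
          (r * Real.sqrt (1 - ‖v‖ ^ 2 + ‖proj U v‖ ^ 2) / ‖proj U g‖) • proj U g) : ℝ) =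
      r * (‖proj U g‖ * Real.sqrt (1 - ‖v‖ ^ 2 + ‖proj U v‖ ^ 2) -
        inner ℝ (proj U g) (proj U v)) := by
  have hpv_mem : proj U v ∈ U := (U.orthogonalProjection v).2
  have hpg_mem : proj U g ∈ U := (U.orthogonalProjection g).2
  have hvperp : ∀ w ∈ U, (inner ℝ (v - proj U v) w : ℝ) = 0 := fun w hw =>
    U.starProjection_inner_eq_zero v w hw
  have hgperp : ∀ w ∈ U, (inner ℝ (g - proj U g) w : ℝ) = 0 := fun w hw =>
    U.starProjection_inner_eq_zero g w hw
  set pv := proj U v with hpv_def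
  set pg := proj U g with hpg_def
  clear_value pv pg
  have hpgn : (0:ℝ) < ‖pg‖ := norm_pos_iff.mpr hg
  -- Pythagoras for v
  have hinvpv : (inner ℝ v pv : ℝ) = ‖pv‖ ^ 2 := by
    have h := hvperp pv hpv_mem
    rw [inner_sub_left, real_inner_self_eq_norm_sq] at h
    linarith
  have hnvpv : ‖v - pv‖ ^ 2 = ‖v‖ ^ 2 - ‖pv‖ ^ 2 := by
    rw [norm_sub_sq_real, hinvpv]; ring
  set D := 1 - ‖v‖ ^ 2 + ‖pv‖ ^ 2 with hD_def
  have hD : 0 ≤ D := by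
    have h1 : ‖v‖ ^ 2 ≤ 1 := by nlinarith [norm_nonneg v]
    have h2 : 0 ≤ ‖pv‖ ^ 2 := sq_nonneg _
    rw [hD_def]; linarith
  set s := Real.sqrt D with hs_def
  have hs0 : 0 ≤ s := Real.sqrt_nonneg _
  have hs2 : s ^ 2 = D := Real.sq_sqrt hD
  clear_value s
  rw [hD_def] at hs2
  clear_value D
  set c := r * s / ‖pg‖ with hc_def
  have hc0 : 0 ≤ c := by rw [hc_def]; positivity
  have hcsq : c ^ 2 * ‖pg‖ ^ 2 = r ^ 2 * s ^ 2 := by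
    rw [hc_def]; field_simp
  clear_value c
  set yst := r • pv - c • pg with hyst_def
  have hyst_mem : yst ∈ U := U.sub_mem (U.smul_mem r hpv_mem) (U.smul_mem c hpg_mem)
  -- cross term
  have hcross : (inner ℝ (pv - v) pg : ℝ) = 0 := by
    have h := hvperp pg hpg_mem
    rw [inner_sub_left] at h
    rw [inner_sub_left]
    linarith
  -- value at yst
  have hval : (inner ℝ g yst : ℝ) = r * inner ℝ pg pv - r * s * ‖pg‖ := by
    have h1 : (inner ℝ g yst : ℝ) = inner ℝ pg yst := by
      have h := hgperp yst hyst_mem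
      rw [inner_sub_left] at h
      linarith
    rw [h1, hyst_def, inner_sub_right, real_inner_smul_right, real_inner_smul_right,
      real_inner_self_eq_norm_sq, hc_def]
    field_simp
  -- feasibility
  have hfeas2 : ‖yst - r • v‖ ^ 2 = r ^ 2 := by
    have e1 : yst - r • v = r • (pv - v) - c • pg := by
      rw [hyst_def, smul_sub]; abel
    rw [e1, norm_sub_sq_real, real_inner_smul_left, real_inner_smul_right, hcross,
      norm_smul, norm_smul]
    have hcn : ‖c‖ = c := by rw [Real.norm_eq_abs, abs_of_nonneg hc0]
    rw [hcn, Real.norm_eq_abs, abs_of_pos hr, norm_sub_rev, mul_pow, mul_pow, hnvpv]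
    linear_combination hcsq + r ^ 2 * hs2
  clear_value yst
  refine ⟨⟨hyst_mem, ?_⟩, ?_, ?_⟩
  · nlinarith [norm_nonneg (yst - r • v)]
  · intro y hy hyr
    have h1 : (inner ℝ g y : ℝ) = inner ℝ pg y := by
      have h := hgperp y hy
      rw [inner_sub_left] at h
      linarith
    rw [hval, h1]
    have hyp_mem : y - r • pv ∈ U := U.sub_mem hy (U.smul_mem r hpv_mem)
    have hdecomp : ‖y - r • v‖ ^ 2 = ‖y - r • pv‖ ^ 2 + r ^ 2 * ‖v - pv‖ ^ 2 := by
      have e2 : y - r • v = (y - r • pv) - r • (v - pv) := by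
        rw [smul_sub]; abel
      have hcr : (inner ℝ (y - r • pv) (r • (v - pv)) : ℝ) = 0 := by
        rw [real_inner_smul_right, real_inner_comm, hvperp _ hyp_mem, mul_zero]
      rw [e2, norm_sub_sq_real, hcr, norm_smul, Real.norm_eq_abs, abs_of_pos hr]
      ring
    have hbound : ‖y - r • pv‖ ^ 2 ≤ r ^ 2 * s ^ 2 := by
      have h2 : ‖y - r • v‖ ^ 2 ≤ r ^ 2 := by
        nlinarith [norm_nonneg (y - r • v)]
      rw [hnvpv] at hdecomp
      nlinarith [sq_nonneg r]
    have hle : ‖y - r • pv‖ ≤ r * s := by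
      nlinarith [norm_nonneg (y - r • pv), mul_nonneg hr.le hs0]
    have hcs := abs_real_inner_le_norm pg (y - r • pv)
    have hsplit : (inner ℝ pg y : ℝ) = inner ℝ pg (y - r • pv) + r * inner ℝ pg pv := by
      rw [inner_sub_right, real_inner_smul_right]; ring
    rw [hsplit]
    have hna := neg_abs_le (inner ℝ pg (y - r • pv) : ℝ)
    nlinarith [mul_le_mul_of_nonneg_left hle (norm_nonneg pg)]
  · rw [hval]; ring
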